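/- Let (f_α)_{α∈Ω} be a regular sequence on a commutative ring R indexed by a well-ordered set Ω, and set I = (f_α : α∈Ω)R. Let 𝕐 = {Y_α : α ∈ Ω} be a family of indeterminates over R indexed by Ω, and for F ∈ R[𝕐] let F(f) ∈ R denote the result of substituting f_α for Y_α. If F ∈ R[𝕐] is homogeneous of degree d in the variables 𝕐 and F(f) ∈ I^{d+1}, then F ∈ I·R[𝕐], i.e. all coefficients of F lie in I. -/

import Mathlib

noncomputable section

/-- A regular sequence indexed by an ordered set `(Ω, lt)`:  the quotient by the whole
family is nonzero and each member is a non-zerodivisor modulo the earlier members. -/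
def IsRegularSeq {R : Type*} [CommRing R] {Ω : Type*} (lt : Ω → Ω → Prop) (f : Ω → R) : Prop :=
  Ideal.span (Set.range f) ≠ ⊤ ∧
  ∀ α : Ω, ∀ h : R, h * f α ∈ Ideal.span (f '' {β | lt β α}) →
    h ∈ Ideal.span (f '' {β | lt β α})

/-- The FR-condition: every finite strictly increasing subfamily is a regular sequence
in this order. -/
def SatisfiesFR {R : Type*} [CommRing R] {Ω : Type*} (lt : Ω → Ω → Prop) (f : Ω → R) : Prop :=
  ∀ (n : ℕ) (α : Fin n → Ω), (∀ i j : Fin n, i < j → lt (α i) (α j)) →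
    IsRegularSeq (· < ·) (fun i => f (α i))

namespace QuasiRegAux

open MvPolynomial

variable {R : Type*} [CommRing R] {Ω : Type*}

/-- All variables occurring in `F` lie in `s`. -/
def VIn (F : MvPolynomial Ω R) (s : Set Ω) : Prop :=
  ∀ m : Ω →₀ ℕ, coeff m F ≠ 0 → ∀ i, m i ≠ 0 → i ∈ s

lemma VIn.mono {F : MvPolynomial Ω R} {s t : Set Ω} (h : VIn F s) (hst : s ⊆ t) : VIn F t :=
  fun m hm i hi => hst (h m hm i hi)

lemma vin_univ (F : MvPolynomial Ω R) : VIn F (Set.univ : Set Ω) :=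
  fun _ _ _ _ => Set.mem_univ _

lemma vars_subset_of_vin {F : MvPolynomial Ω R} {s : Set Ω} (h : VIn F s) : ↑F.vars ⊆ s := by
  intro i hi
  rw [Finset.mem_coe, mem_vars] at hi
  obtain ⟨m, hm, him⟩ := hi
  exact h m (mem_support_iff.1 hm) i (Finsupp.mem_support_iff.1 him)

lemma vin_of_vars_subset {F : MvPolynomial Ω R} {s : Set Ω} (h : ↑F.vars ⊆ s) : VIn F s := by
  intro m hm i hi
  exact h (by rw [Finset.mem_coe, mem_vars]
              exact ⟨m, mem_support_iff.2 hm, Finsupp.mem_support_iff.2 hi⟩)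

lemma VIn.add {F G : MvPolynomial Ω R} {s : Set Ω} (hF : VIn F s) (hG : VIn G s) :
    VIn (F + G) s := by
  intro m hm i hi
  rw [coeff_add] at hm
  by_cases h : coeff m F = 0
  · exact hG m (fun h' => hm (by rw [h, h', add_zero])) i hi
  · exact hF m h i hi

lemma VIn.sub {F G : MvPolynomial Ω R} {s : Set Ω} (hF : VIn F s) (hG : VIn G s) :
    VIn (F - G) s := by
  intro m hm i hi
  rw [coeff_sub] at hm
  by_cases h : coeff m F = 0
  · exact hG m (fun h' => hm (by rw [h, h', sub_zero])) i hi
  · exact hF m h i hi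

lemma vin_zero (s : Set Ω) : VIn (0 : MvPolynomial Ω R) s := by
  intro m hm
  simp at hm

lemma vin_C (r : R) (s : Set Ω) : VIn (C r : MvPolynomial Ω R) s := by
  classical
  intro m hm i hi
  rw [coeff_C] at hm
  by_cases h : (0 : Ω →₀ ℕ) = m
  · rw [← h] at hi; simp at hi
  · rw [if_neg h] at hm; exact absurd rfl hm

lemma VIn.C_mul {F : MvPolynomial Ω R} {s : Set Ω} (r : R) (hF : VIn F s) :
    VIn (C r * F) s := by
  intro m hm i hi
  rw [coeff_C_mul] at hm
  exact hF m (fun h => hm (by rw [h, mul_zero])) i hi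

lemma VIn.mul {F G : MvPolynomial Ω R} {s : Set Ω} (hF : VIn F s) (hG : VIn G s) :
    VIn (F * G) s := by
  classical
  intro m hm i hi
  have hmem := MvPolynomial.support_mul F G (mem_support_iff.2 hm)
  rw [Finset.mem_add] at hmem
  obtain ⟨m1, hm1, m2, hm2, rfl⟩ := hmem
  have : m1 i ≠ 0 ∨ m2 i ≠ 0 := by
    by_contra h
    push_neg at h
    exact hi (by simp [Finsupp.add_apply, h.1, h.2])
  rcases this with h | h
  · exact hF m1 (mem_support_iff.1 hm1) i h
  · exact hG m2 (mem_support_iff.1 hm2) i h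

lemma vin_X {s : Set Ω} {i : Ω} (hi : i ∈ s) : VIn (X i : MvPolynomial Ω R) s := by
  classical
  intro m hm j hj
  rw [coeff_X'] at hm
  by_cases h : Finsupp.single i 1 = m
  · rw [← h] at hj
    rcases Finsupp.single_apply_ne_zero.1 hj with ⟨rfl, -⟩
    exact hi
  · rw [if_neg h] at hm; exact absurd rfl hm

lemma vin_empty_eq_C {F : MvPolynomial Ω R} (h : VIn F (∅ : Set Ω)) :
    F = C (coeff 0 F) := by
  classical
  ext m
  rcases eq_or_ne m 0 with rfl | hm
  · simp [coeff_C]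
  · rw [coeff_C, if_neg (fun h0 => hm h0.symm)]
    by_contra hc
    obtain ⟨i, hi⟩ := Finsupp.ne_iff.1 hm
    exact h m hc i (by simpa using hi) 

lemma weight_one_eq (m : Ω →₀ ℕ) :
    (Finsupp.weight (1 : Ω → ℕ)) m = ∑ i ∈ m.support, m i := by
  rw [Finsupp.weight_apply, Finsupp.sum]
  simp

lemma isHomog_def {F : MvPolynomial Ω R} {d : ℕ} :
    F.IsHomogeneous d ↔
      ∀ m : Ω →₀ ℕ, coeff m F ≠ 0 → (Finsupp.weight (1 : Ω → ℕ)) m = d :=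
  Iff.rfl

lemma homog_zero_eq_C {F : MvPolynomial Ω R} (h : F.IsHomogeneous 0) :
    F = C (coeff 0 F) := by
  classical
  ext m
  rcases eq_or_ne m 0 with rfl | hm
  · simp [coeff_C]
  · rw [coeff_C, if_neg (fun h0 => hm h0.symm)]
    by_contra hc
    have hw := isHomog_def.1 h m hc
    rw [weight_one_eq] at hw
    apply hm
    apply Finsupp.support_eq_empty.1
    by_contra hsupp
    obtain ⟨i, hi⟩ := Finset.nonempty_iff_ne_empty.2 hsupp
    have := Finset.sum_eq_zero_iff.1 hw i hi
    exact (Finsupp.mem_support_iff.1 hi) this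

variable (f : Ω → R)

lemma prod_pow_mem (P : Ideal R) (m : Ω →₀ ℕ) (t : Finset Ω) (h : ∀ i ∈ t, f i ∈ P) :
    (∏ i ∈ t, f i ^ m i) ∈ P ^ (∑ i ∈ t, m i) := by
  classical
  induction t using Finset.induction with
  | empty => simp [Ideal.one_eq_top]
  | insert _ _ ha ih =>
    rw [Finset.prod_insert ha, Finset.sum_insert ha, pow_add]
    exact Ideal.mul_mem_mul (Ideal.pow_mem_pow (h _ (Finset.mem_insert_self _ _)) _)
      (ih fun i hi => h i (Finset.mem_insert_of_mem hi))

lemma f_mem_span {s : Set Ω} {i : Ω} (hi : i ∈ s) : f i ∈ Ideal.span (f '' s) :=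
  Ideal.subset_span ⟨i, hi, rfl⟩

lemma aeval_mem_pow {d : ℕ} {s : Set Ω} {F : MvPolynomial Ω R}
    (hF : F.IsHomogeneous d) (hv : VIn F s) :
    aeval f F ∈ Ideal.span (f '' s) ^ d := by
  have hrw : aeval f F = ∑ m ∈ F.support, aeval f (monomial m (coeff m F)) := by
    conv_lhs => rw [F.as_sum]
    rw [map_sum]
  rw [hrw]
  refine Submodule.sum_mem _ fun m hm => ?_
  rw [aeval_monomial]
  have hw : ∑ i ∈ m.support, m i = d := by
    rw [← weight_one_eq]
    exact isHomog_def.1 hF m (mem_support_iff.1 hm)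
  have hprod : (∏ i ∈ m.support, f i ^ m i) ∈ Ideal.span (f '' s) ^ d := by
    rw [← hw]
    exact prod_pow_mem f _ m m.support fun i hi =>
      f_mem_span f (hv m (mem_support_iff.1 hm) i (Finsupp.mem_support_iff.1 hi))
  exact Ideal.mul_mem_left _ _ hprod

lemma aeval_mem_pow_succ {d : ℕ} {s : Set Ω} {F : MvPolynomial Ω R}
    (hF : F.IsHomogeneous d) (hv : VIn F s)
    (hc : ∀ m, coeff m F ∈ Ideal.span (f '' s)) :
    aeval f F ∈ Ideal.span (f '' s) ^ (d + 1) := by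
  have hrw : aeval f F = ∑ m ∈ F.support, aeval f (monomial m (coeff m F)) := by
    conv_lhs => rw [F.as_sum]
    rw [map_sum]
  rw [hrw]
  refine Submodule.sum_mem _ fun m hm => ?_
  rw [aeval_monomial, pow_succ']
  have hw : ∑ i ∈ m.support, m i = d := by
    rw [← weight_one_eq]
    exact isHomog_def.1 hF m (mem_support_iff.1 hm)
  have hprod : (∏ i ∈ m.support, f i ^ m i) ∈ Ideal.span (f '' s) ^ d := by
    rw [← hw]
    exact prod_pow_mem f _ m m.support fun i hi =>
      f_mem_span f (hv m (mem_support_iff.1 hm) i (Finsupp.mem_support_iff.1 hi))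
  have : (algebraMap R R) (coeff m F) = coeff m F := rfl
  rw [this]
  exact Ideal.mul_mem_mul (hc m) hprod

/-- The ideal of values of homogeneous degree-`d` polynomials in variables from `s`. -/
def Kmod (s : Set Ω) (d : ℕ) : Ideal R where
  carrier := {x | ∃ G : MvPolynomial Ω R, G.IsHomogeneous d ∧ VIn G s ∧ aeval f G = x}
  add_mem' := by
    rintro a b ⟨G1, h1, v1, rfl⟩ ⟨G2, h2, v2, rfl⟩
    exact ⟨G1 + G2, h1.add h2, v1.add v2, map_add _ _ _⟩
  zero_mem' := ⟨0, isHomogeneous_zero _ _ _, vin_zero _, map_zero _⟩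
  smul_mem' := by
    rintro r a ⟨G, h, v, rfl⟩
    exact ⟨C r * G, by simpa using (isHomogeneous_C Ω r).mul h, v.C_mul r,
      by rw [map_mul, aeval_C]; rfl⟩

lemma span_le_Kmod_one (s : Set Ω) : Ideal.span (f '' s) ≤ Kmod f s 1 := by
  rw [Ideal.span_le]
  rintro x ⟨i, hi, rfl⟩
  exact ⟨X i, isHomogeneous_X _ _, vin_X hi, aeval_X _ _⟩

lemma span_pow_le_Kmod (s : Set Ω) (d : ℕ) :
    Ideal.span (f '' s) ^ d ≤ Kmod f s d := by
  induction d with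
  | zero =>
    intro x _
    exact ⟨C x, isHomogeneous_C _ _, vin_C _ _, by rw [aeval_C]; rfl⟩
  | succ k ih =>
    rw [pow_succ]
    refine Ideal.mul_le.2 fun a ha b hb => ?_
    obtain ⟨G, hG, vG, rfl⟩ := ih ha
    obtain ⟨A, hA, vA, rfl⟩ := span_le_Kmod_one f s hb
    exact ⟨G * A, hG.mul hA, vG.mul vA, map_mul _ _ _⟩

/-- The ideal of values of homogeneous degree-`d` polynomials in variables from `s`
with all coefficients in the ideal generated by `f '' s`. -/
def Kmod' (s : Set Ω) (d : ℕ) : Ideal R where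
  carrier := {x | ∃ G : MvPolynomial Ω R, G.IsHomogeneous d ∧ VIn G s ∧
    (∀ m, coeff m G ∈ Ideal.span (f '' s)) ∧ aeval f G = x}
  add_mem' := by
    rintro a b ⟨G1, h1, v1, c1, rfl⟩ ⟨G2, h2, v2, c2, rfl⟩
    exact ⟨G1 + G2, h1.add h2, v1.add v2,
      fun m => by rw [coeff_add]; exact add_mem (c1 m) (c2 m), map_add _ _ _⟩
  zero_mem' := ⟨0, isHomogeneous_zero _ _ _, vin_zero _,
    fun m => by simp, map_zero _⟩
  smul_mem' := by
    rintro r a ⟨G, h, v, c, rfl⟩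
    exact ⟨C r * G, by simpa using (isHomogeneous_C Ω r).mul h, v.C_mul r,
      fun m => by rw [coeff_C_mul]; exact Ideal.mul_mem_left _ _ (c m),
      by rw [map_mul, aeval_C]; rfl⟩

lemma span_pow_succ_le_Kmod' (s : Set Ω) (d : ℕ) :
    Ideal.span (f '' s) ^ (d + 1) ≤ Kmod' f s d := by
  rw [pow_succ']
  refine Ideal.mul_le.2 fun a ha b hb => ?_
  obtain ⟨G, hG, vG, rfl⟩ := span_pow_le_Kmod f s d hb
  exact ⟨C a * G, by simpa using (isHomogeneous_C Ω a).mul hG, vG.C_mul a,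
    fun m => by rw [coeff_C_mul]; exact Ideal.mul_mem_right _ _ ha,
    by rw [map_mul, aeval_C]; rfl⟩

lemma fin_witness {s : Set Ω} {k : ℕ} {x : R}
    (hx : x ∈ Ideal.span (f '' s) ^ k) :
    ∃ D : Finset Ω, ↑D ⊆ s ∧ x ∈ Ideal.span (f '' (↑D : Set Ω)) ^ k := by
  classical
  induction k generalizing x with
  | zero => exact ⟨∅, by simp, by simp [Ideal.one_eq_top]⟩
  | succ k ih =>
    rw [pow_succ'] at hx
    refine Submodule.mul_induction_on hx ?_ ?_
    · intro a ha b hb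
      obtain ⟨D2, hD2, hb2⟩ := ih hb
      obtain ⟨T, hT, haT⟩ := Submodule.mem_span_finite_of_mem_span ha
      have hchoice : ∀ t ∈ T, ∃ w, w ∈ s ∧ f w = t := by
        intro t ht
        obtain ⟨w, hw, hfw⟩ := hT ht
        exact ⟨w, hw, hfw⟩
      choose g hg1 hg2 using hchoice
      refine ⟨T.attach.image (fun t : {x // x ∈ T} => g t.1 t.2) ∪ D2, ?_, ?_⟩
      · intro i hi
        rcases Finset.mem_union.1 hi with h | h
        · obtain ⟨t, -, rfl⟩ := Finset.mem_image.1 h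
          exact hg1 _ _
        · exact hD2 h
      · rw [pow_succ']
        refine Ideal.mul_mem_mul ?_ ?_
        · have hsub : (↑T : Set R) ⊆
              ↑(Ideal.span (f '' ((↑(T.attach.image (fun t : {x // x ∈ T} => g t.1 t.2) ∪ D2) : Set Ω)))) := by
            intro t ht
            refine Ideal.subset_span ⟨g t ht, ?_, hg2 t ht⟩
            refine Finset.mem_coe.2 (Finset.mem_union_left _ ?_)
            exact Finset.mem_image.2 ⟨⟨t, ht⟩, Finset.mem_attach _ _, rfl⟩
          exact Submodule.span_le.2 hsub haT
        · exact Ideal.pow_right_mono (Ideal.span_mono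
            (Set.image_mono (f := f) (by exact_mod_cast Finset.subset_union_right))) _ hb2
    · rintro x y ⟨Dx, hDx, hx'⟩ ⟨Dy, hDy, hy'⟩
      refine ⟨Dx ∪ Dy, by simp [Set.union_subset_iff, hDx, hDy, Finset.coe_union], ?_⟩
      refine add_mem ?_ ?_
      · exact Ideal.pow_right_mono (Ideal.span_mono
          (Set.image_mono (f := f) (by exact_mod_cast Finset.subset_union_left))) _ hx'
      · exact Ideal.pow_right_mono (Ideal.span_mono
          (Set.image_mono (f := f) (by exact_mod_cast Finset.subset_union_right))) _ hy'

lemma exists_max (lt : Ω → Ω → Prop) [IsTrichotomous Ω lt] [IsTrans Ω lt]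
    (E : Finset Ω) (hE : E.Nonempty) : ∃ γ ∈ E, ∀ β ∈ E, β = γ ∨ lt β γ := by
  classical
  induction E using Finset.induction with
  | empty => exact absurd hE (by simp)
  | @insert a E' ha ih =>
    rcases E'.eq_empty_or_nonempty with rfl | hne
    · exact ⟨a, by simp, by simp⟩
    · obtain ⟨γ, hγE, hmax⟩ := ih hne
      rcases trichotomous_of lt a γ with h | h | h
      · refine ⟨γ, Finset.mem_insert_of_mem hγE, fun β hβ => ?_⟩
        rcases Finset.mem_insert.1 hβ with rfl | hβ'
        · exact Or.inr h
        · exact hmax β hβ'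
      · subst h
        refine ⟨a, Finset.mem_insert_self _ _, fun β hβ => ?_⟩
        rcases Finset.mem_insert.1 hβ with rfl | hβ'
        · exact Or.inl rfl
        · exact hmax β hβ'
      · refine ⟨a, Finset.mem_insert_self _ _, fun β hβ => ?_⟩
        rcases Finset.mem_insert.1 hβ with rfl | hβ'
        · exact Or.inl rfl
        · rcases hmax β hβ' with rfl | hlt
          · exact Or.inr h
          · exact Or.inr (trans_of lt hlt h)

end QuasiRegAux

open MvPolynomial QuasiRegAux in
/-- Lemma 1.17: if `(f_α)` is a regular sequence generating the ideal `I`, and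
`F ∈ R[Y_α : α ∈ Ω]` is homogeneous of degree `d` with `F(f) ∈ I^{d+1}`, then all
coefficients of `F` lie in `I` (i.e. `F ∈ I·R[𝕐]`). -/
theorem coeff_mem_of_aeval_mem_pow {R : Type*} [CommRing R] {Ω : Type*}
    (lt : Ω → Ω → Prop) (hwo : IsWellOrder Ω lt) (f : Ω → R)
    (hreg : IsRegularSeq lt f) (d : ℕ) (F : MvPolynomial Ω R)
    (hF : F.IsHomogeneous d)
    (hFf : MvPolynomial.aeval f F ∈ (Ideal.span (Set.range f)) ^ (d + 1)) :
    ∀ m, MvPolynomial.coeff m F ∈ Ideal.span (Set.range f) := by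
  classical
  haveI := hwo
  -- Descent: the statement for all `γ`-truncations implies it for any lower set `s`.
  have descent : ∀ s : Set Ω, (∀ γ ∈ s, insert γ {β | lt β γ} ⊆ s) →
      (∀ γ ∈ s, ∀ (k : ℕ) (G : MvPolynomial Ω R), G.IsHomogeneous k →
        VIn G (insert γ {β | lt β γ}) →
        aeval f G ∈ (Ideal.span (f '' insert γ {β | lt β γ})) ^ (k + 1) →
        ∀ m', coeff m' G ∈ Ideal.span (f '' insert γ {β | lt β γ})) →
      ∀ (k : ℕ) (G : MvPolynomial Ω R), G.IsHomogeneous k → VIn G s →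
        aeval f G ∈ (Ideal.span (f '' s)) ^ (k + 1) →
        ∀ m', coeff m' G ∈ Ideal.span (f '' s) := by
    intro s hlow hQ k G hG hv hval m
    obtain ⟨D, hDs, hxD⟩ := fin_witness f hval
    set E := D ∪ G.vars with hE
    have hEs : (↑E : Set Ω) ⊆ s := by
      intro i hi
      rcases Finset.mem_union.1 (Finset.mem_coe.1 hi) with h | h
      · exact hDs (Finset.mem_coe.2 h)
      · exact vars_subset_of_vin hv (Finset.mem_coe.2 h)
    rcases E.eq_empty_or_nonempty with hEe | hEne
    · have hEe' : D ∪ G.vars = ∅ := by rw [← hE]; exact hEe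
      have hD : D = ∅ := (Finset.union_eq_empty.1 hEe').1
      have hvars : G.vars = ∅ := (Finset.union_eq_empty.1 hEe').2
      have hvin0 : VIn G (∅ : Set Ω) := vin_of_vars_subset (by rw [hvars]; simp)
      have hGC : G = C (coeff 0 G) := vin_empty_eq_C hvin0
      have hev0 : aeval f G = 0 := by
        have h1 : aeval f G ∈ Ideal.span (f '' ((↑D : Set Ω))) ^ (k + 1) := hxD
        rw [hD] at h1
        have h2 := Ideal.pow_le_pow_right (show 1 ≤ k + 1 by omega) h1
        rw [pow_one, Finset.coe_empty, Set.image_empty, Ideal.span_empty] at h2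
        exact (Submodule.mem_bot R).1 h2
      have hc0 : coeff 0 G = 0 := by
        have h3 : aeval f G = coeff 0 G := by
          conv_lhs => rw [hGC]
          rw [aeval_C]
          rfl
        rw [← h3, hev0]
      rw [hGC, coeff_C]
      split
      · rw [hc0]; exact zero_mem _
      · exact zero_mem _
    · obtain ⟨γ, hγE, hmax⟩ := exists_max lt E hEne
      have hγs : γ ∈ s := hEs (Finset.mem_coe.2 hγE)
      have hvS : VIn G (insert γ {β | lt β γ}) := by
        intro m' hm' i hi
        have hiE : i ∈ E := Finset.mem_union_right _ (by
          rw [mem_vars]; exact ⟨m', mem_support_iff.2 hm', Finsupp.mem_support_iff.2 hi⟩)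
        rcases hmax i hiE with rfl | h
        · exact Set.mem_insert _ _
        · exact Set.mem_insert_of_mem _ h
      have hDsub : (↑D : Set Ω) ⊆ insert γ {β | lt β γ} := by
        intro β hβ
        have hβE : β ∈ E := Finset.mem_union_left _ (Finset.mem_coe.1 hβ)
        rcases hmax β hβE with rfl | h
        · exact Set.mem_insert _ _
        · exact Set.mem_insert_of_mem _ h
      have hvalS : aeval f G ∈ Ideal.span (f '' insert γ {β | lt β γ}) ^ (k + 1) :=
        Ideal.pow_right_mono (Ideal.span_mono (Set.image_mono (f := f) hDsub)) _ hxD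
      have hres := hQ γ hγs k G hG hvS hvalS m
      exact Ideal.span_mono (Set.image_mono (f := f) (hlow γ hγs)) hres
  -- Main transfinite induction
  have main : ∀ γ : Ω, ∀ (k : ℕ) (G : MvPolynomial Ω R), G.IsHomogeneous k →
      VIn G (insert γ {β | lt β γ}) →
      aeval f G ∈ (Ideal.span (f '' insert γ {β | lt β γ})) ^ (k + 1) →
      ∀ m', coeff m' G ∈ Ideal.span (f '' insert γ {β | lt β γ}) := by
    intro γ0
    refine IsWellFounded.induction lt (motive := fun γ => ∀ (k : ℕ) (G : MvPolynomial Ω R),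
      G.IsHomogeneous k → VIn G (insert γ {β | lt β γ}) →
      aeval f G ∈ (Ideal.span (f '' insert γ {β | lt β γ})) ^ (k + 1) →
      ∀ m', coeff m' G ∈ Ideal.span (f '' insert γ {β | lt β γ})) γ0 ?_
    intro γ IH
    have hlowB : ∀ δ ∈ {β | lt β γ}, insert δ {β | lt β δ} ⊆ {β | lt β γ} := by
      intro δ hδ x hx
      rcases Set.mem_insert_iff.1 hx with rfl | hx'
      · exact hδ
      · exact trans_of lt hx' hδ
    have PT := descent {β | lt β γ} hlowB (fun δ hδ => IH δ hδ)
    have ZT : ∀ (k : ℕ) (G' : MvPolynomial Ω R), G'.IsHomogeneous k →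
        VIn G' {β | lt β γ} → aeval f G' = 0 →
        ∀ m', coeff m' G' ∈ Ideal.span (f '' {β | lt β γ}) := by
      intro k G' h1 h2 h3
      exact PT k G' h1 h2 (by rw [h3]; exact zero_mem _)
    have hregγ : ∀ y : R, y * f γ ∈ Ideal.span (f '' {β | lt β γ}) →
        y ∈ Ideal.span (f '' {β | lt β γ}) := hreg.2 γ
    have CL : ∀ (k : ℕ) (y : R), y * f γ ∈ Ideal.span (f '' {β | lt β γ}) ^ k →
        y ∈ Ideal.span (f '' {β | lt β γ}) ^ k := by
      intro k
      induction k with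
      | zero => intro y _; rw [pow_zero, Ideal.one_eq_top]; trivial
      | succ n ihn =>
        intro y hy
        have h1 : y ∈ Ideal.span (f '' {β | lt β γ}) ^ n :=
          ihn y (Ideal.pow_le_pow_right (Nat.le_succ n) hy)
        obtain ⟨V, hVh, hVv, hVe⟩ := span_pow_le_Kmod f {β | lt β γ} n h1
        have h2 : aeval f (C (f γ) * V) ∈ Ideal.span (f '' {β | lt β γ}) ^ (n + 1) := by
          rw [map_mul, aeval_C]
          have ha : (algebraMap R R) (f γ) = f γ := rfl
          rw [ha, hVe, mul_comm]
          exact hy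
        have h3 := PT n (C (f γ) * V)
          (by simpa using (isHomogeneous_C Ω (f γ)).mul hVh) (hVv.C_mul _) h2
        have h4 : ∀ m', coeff m' V ∈ Ideal.span (f '' {β | lt β γ}) := by
          intro m'
          refine hregγ _ ?_
          have h5 := h3 m'
          rw [coeff_C_mul] at h5
          rwa [mul_comm]
        rw [← hVe]
        exact aeval_mem_pow_succ f hVh hVv h4
    intro k
    induction k with
    | zero =>
      intro G hG hv hval m
      rw [zero_add, pow_one] at hval
      have hGC := homog_zero_eq_C hG
      have hval' : coeff 0 G ∈ Ideal.span (f '' insert γ {β | lt β γ}) := by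
        have h3 : aeval f G = coeff 0 G := by
          conv_lhs => rw [hGC]
          rw [aeval_C]
          rfl
        rwa [h3] at hval
      rw [hGC, coeff_C]
      split
      · exact hval'
      · exact zero_mem _
    | succ dd ihd =>
      intro G hG hv hval
      obtain ⟨G₀, hG₀h, hG₀v, hG₀c, hG₀e⟩ :=
        span_pow_succ_le_Kmod' f (insert γ {β | lt β γ}) (dd + 1) hval
      set F' := G - G₀ with hF'def
      have hF'h : F'.IsHomogeneous (dd + 1) := hG.sub hG₀h
      have vF' : VIn F' (insert γ {β | lt β γ}) := hv.sub hG₀v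
      have eF' : aeval f F' = 0 := by rw [hF'def, map_sub, hG₀e, sub_self]
      suffices hs : ∀ m, coeff m F' ∈ Ideal.span (f '' insert γ {β | lt β γ}) by
        intro m
        have h6 : coeff m G = coeff m F' + coeff m G₀ := by rw [hF'def, coeff_sub]; ring
        rw [h6]; exact add_mem (hs m) (hG₀c m)
      intro m
      have hdecomp := divMonomial_add_modMonomial F' (Finsupp.single γ 1)
      set Hp := F'.divMonomial (Finsupp.single γ 1) with hHpdef
      set Gp := F'.modMonomial (Finsupp.single γ 1) with hGpdef
      have hmono : aeval f ((monomial (Finsupp.single γ 1) 1) : MvPolynomial Ω R) = f γ := by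
        rw [aeval_monomial]
        simp [Finsupp.prod_single_index]
      have hGp_eq : ∀ m' : Ω →₀ ℕ, coeff m' Gp ≠ 0 →
          (¬ Finsupp.single γ 1 ≤ m') ∧ coeff m' Gp = coeff m' F' := by
        intro m' hm'
        by_cases h : Finsupp.single γ 1 ≤ m'
        · exact absurd (by rw [hGpdef]; exact coeff_modMonomial_of_le F' h) hm'
        · exact ⟨h, by rw [hGpdef]; exact coeff_modMonomial_of_not_le F' h⟩
      have hGph : Gp.IsHomogeneous (dd + 1) := by
        rw [isHomog_def]
        intro m' hm'
        rw [(hGp_eq m' hm').2] at hm'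
        exact isHomog_def.1 hF'h _ hm'
      have hGp_vin : VIn Gp {β | lt β γ} := by
        intro m' hm' i hi
        obtain ⟨hnle, heq⟩ := hGp_eq m' hm'
        have hiS : i ∈ insert γ {β | lt β γ} := vF' m' (by rw [← heq]; exact hm') i hi
        rcases Set.mem_insert_iff.1 hiS with rfl | hiB
        · exact absurd (Finsupp.single_le_iff.2 (Nat.one_le_iff_ne_zero.2 hi)) hnle
        · exact hiB
      have hHph : Hp.IsHomogeneous dd := by
        rw [isHomog_def]
        intro m' hm'
        rw [hHpdef, coeff_divMonomial] at hm'
        have h1 := isHomog_def.1 hF'h _ hm'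
        rw [map_add] at h1
        have h2 : (Finsupp.weight (1 : Ω → ℕ)) (Finsupp.single γ 1) = 1 := by
          rw [weight_one_eq, Finsupp.support_single_ne_zero _ one_ne_zero]
          simp
        omega
      have hHp_vin : VIn Hp (insert γ {β | lt β γ}) := by
        intro m' hm' i hi
        rw [hHpdef, coeff_divMonomial] at hm'
        exact vF' _ hm' i (by rw [Finsupp.add_apply]; omega)
      have heq0 : f γ * aeval f Hp + aeval f Gp = 0 := by
        have h7 := congrArg (aeval f) hdecomp
        rw [map_add, map_mul, hmono, eF'] at h7
        exact h7
      have hGpJ : aeval f Gp ∈ Ideal.span (f '' {β | lt β γ}) ^ (dd + 1) :=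
        aeval_mem_pow f hGph hGp_vin
      have hHpJ' : (aeval f Hp) * f γ ∈ Ideal.span (f '' {β | lt β γ}) ^ (dd + 1) := by
        have h8 : (aeval f Hp) * f γ = -(aeval f Gp) := by linear_combination heq0
        rw [h8]
        exact neg_mem hGpJ
      have hHpJ : aeval f Hp ∈ Ideal.span (f '' {β | lt β γ}) ^ (dd + 1) :=
        CL (dd + 1) _ hHpJ'
      have hBS : Ideal.span (f '' {β | lt β γ}) ≤
          Ideal.span (f '' insert γ {β | lt β γ}) :=
        Ideal.span_mono (Set.image_mono (f := f) (Set.subset_insert _ _))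
      have hHc : ∀ m', coeff m' Hp ∈ Ideal.span (f '' insert γ {β | lt β γ}) :=
        ihd Hp hHph hHp_vin (Ideal.pow_right_mono hBS _ hHpJ)
      obtain ⟨V, hVh, hVv, hVe⟩ := span_pow_le_Kmod f {β | lt β γ} (dd + 1) hHpJ
      have hWh : (Gp + C (f γ) * V).IsHomogeneous (dd + 1) :=
        hGph.add (by simpa using (isHomogeneous_C Ω (f γ)).mul hVh)
      have hWv : VIn (Gp + C (f γ) * V) {β | lt β γ} := hGp_vin.add (hVv.C_mul _)
      have hWe : aeval f (Gp + C (f γ) * V) = 0 := by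
        rw [map_add, map_mul, aeval_C]
        have ha : (algebraMap R R) (f γ) = f γ := rfl
        rw [ha, hVe]
        linear_combination heq0
      have hWc := ZT (dd + 1) _ hWh hWv hWe
      have hfγ : f γ ∈ Ideal.span (f '' insert γ {β | lt β γ}) :=
        f_mem_span f (Set.mem_insert _ _)
      have hGpc : ∀ m', coeff m' Gp ∈ Ideal.span (f '' insert γ {β | lt β γ}) := by
        intro m'
        have h9 : coeff m' Gp =
            coeff m' (Gp + C (f γ) * V) - f γ * coeff m' V := by
          rw [coeff_add, coeff_C_mul]; ring
        rw [h9]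
        exact sub_mem (hBS (hWc m')) (Ideal.mul_mem_right _ _ hfγ)
      have hsplit : coeff m F' =
          coeff m Gp + coeff m ((monomial (Finsupp.single γ 1) 1 : MvPolynomial Ω R) * Hp) := by
        conv_lhs => rw [← hdecomp]
        rw [coeff_add]; ring
      rw [hsplit]
      refine add_mem (hGpc m) ?_
      have hXg : ((monomial (Finsupp.single γ 1) 1 : MvPolynomial Ω R)) * Hp = Hp * X γ := by
        have : (X γ : MvPolynomial Ω R) = monomial (Finsupp.single γ 1) 1 := rfl
        rw [this]; ring
      rw [hXg, coeff_mul_X']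
      split
      · exact hHc _
      · exact zero_mem _
  -- conclude
  have huniv : ∀ γ ∈ (Set.univ : Set Ω), insert γ {β | lt β γ} ⊆ Set.univ :=
    fun _ _ => Set.subset_univ _
  have hfin := descent Set.univ huniv (fun γ _ => main γ) d F hF (vin_univ F)
    (by rw [Set.image_univ]; exact hFf)
  intro m
  have hm := hfin m
  rwa [Set.image_univ] at hm


end
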